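/- Let X be a Hilbert space, A, B nonempty closed convex subsets with E, F (the proximal sets) nonempty, and let {A_n}, {B_n} be sequences of closed convex sets converging to A, B in the Attouch-Wets sense. If the perturbed alternating projection sequences a_n = P_{A_n}(b_n), b_n = P_{B_n}(a_{n-1}) satisfy a_n → e in norm, then e ∈ E (and b_n → e + v where v is the displacement vector). -/

import Mathlib

open Pointwise

/-- `p` is the metric projection of `x` onto the set `C`. -/
def IsProjPt {X : Type*} [NormedAddCommGroup X] (C : Set X) (x p : X) : Prop :=
  p ∈ C ∧ ∀ y ∈ C, dist x p ≤ dist x y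

/-- Attouch-Wets convergence of a sequence of sets: for each `N`, the truncated
Hausdorff "distance" `h_N` tends to `0`. -/
def AWTendsto {X : Type*} [NormedAddCommGroup X] (Cn : ℕ → Set X) (C : Set X) : Prop :=
  ∀ N : ℕ, Filter.Tendsto (fun n =>
      max (⨆ s : ↥(Cn n ∩ Metric.closedBall (0 : X) N), Metric.infDist (s : X) C)
          (⨆ s : ↥(C ∩ Metric.closedBall (0 : X) N), Metric.infDist (s : X) (Cn n)))
    Filter.atTop (nhds 0)

section Helpers

open Metric Filter

variable {X : Type*} [NormedAddCommGroup X] [InnerProductSpace ℝ X]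

lemma le_infDist' {s : Set X} (hs : s.Nonempty) {x : X} {d : ℝ}
    (h : ∀ y ∈ s, d ≤ dist x y) : d ≤ infDist x s := by
  have : Nonempty s := hs.to_subtype
  rw [Metric.infDist_eq_iInf]
  exact le_ciInf fun y => h y y.2

lemma projpt_sq {C : Set X} (hC : Convex ℝ C) {x p q : X}
    (hp : IsProjPt C x p) (hq : q ∈ C) :
    ‖q - p‖ ^ 2 ≤ 2 * dist x q ^ 2 - 2 * dist x p ^ 2 := by
  have hmid : (1/2 : ℝ) • q + (1/2 : ℝ) • p ∈ C :=
    hC hq hp.1 (by norm_num) (by norm_num) (by norm_num)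
  have h1 : dist x p ≤ dist x ((1/2 : ℝ) • q + (1/2 : ℝ) • p) := hp.2 _ hmid
  have hpar := parallelogram_law_with_norm ℝ (x - q) (x - p)
  have hsum : (x - q) + (x - p) = (2 : ℝ) • (x - ((1/2 : ℝ) • q + (1/2 : ℝ) • p)) := by
    module
  have hnorm : ‖(x - q) + (x - p)‖ = 2 * ‖x - ((1/2 : ℝ) • q + (1/2 : ℝ) • p)‖ := by
    rw [hsum, norm_smul]
    simp
  have hdiff : (x - q) - (x - p) = p - q := by abel
  rw [hdiff, hnorm] at hpar
  have hrev : ‖p - q‖ = ‖q - p‖ := norm_sub_rev _ _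
  rw [hrev] at hpar
  simp only [dist_eq_norm] at h1 ⊢
  have h1sq : ‖x - p‖ * ‖x - p‖ ≤
      ‖x - ((1/2 : ℝ) • q + (1/2 : ℝ) • p)‖ * ‖x - ((1/2 : ℝ) • q + (1/2 : ℝ) • p)‖ :=
    mul_le_mul h1 h1 (norm_nonneg _) (norm_nonneg _)
  nlinarith [hpar, h1sq]

lemma isProjPt_unique {C : Set X} (hC : Convex ℝ C) {x p q : X}
    (hp : IsProjPt C x p) (hq : IsProjPt C x q) : p = q := by
  have h1 := projpt_sq hC hp hq.1
  have h2 : dist x q ≤ dist x p := hq.2 p hp.1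
  have h3 : ‖q - p‖ ^ 2 ≤ 0 := by
    nlinarith [dist_nonneg (x := x) (y := p), dist_nonneg (x := x) (y := q)]
  have h4 : ‖q - p‖ ^ 2 = 0 := le_antisymm h3 (sq_nonneg _)
  have h5 : ‖q - p‖ = 0 := by
    have := sq_eq_zero_iff.mp h4
    exact this
  exact (sub_eq_zero.mp (norm_eq_zero.mp h5)).symm

lemma exists_isProjPt [CompleteSpace X] {C : Set X} (hne : C.Nonempty) (hc : IsClosed C)
    (hconv : Convex ℝ C) (x : X) : ∃ p, IsProjPt C x p := by
  obtain ⟨p, hpC, hpn⟩ := exists_norm_eq_iInf_of_complete_convex hne hc.isComplete hconv x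
  have : Nonempty C := hne.to_subtype
  have hbdd : BddBelow (Set.range fun w : C => ‖x - (w : X)‖) :=
    ⟨0, Set.forall_mem_range.2 fun _ => norm_nonneg _⟩
  refine ⟨p, hpC, fun y hy => ?_⟩
  rw [dist_eq_norm, dist_eq_norm, hpn]
  exact ciInf_le hbdd ⟨y, hy⟩

lemma isProjPt_inner {C : Set X} (hC : Convex ℝ C) {x p : X} (hp : IsProjPt C x p) :
    ∀ w ∈ C, (inner ℝ (x - p) (w - p) : ℝ) ≤ 0 := by
  have : Nonempty C := ⟨⟨p, hp.1⟩⟩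
  refine (norm_eq_iInf_iff_real_inner_le_zero hC hp.1).mp ?_
  have hbdd : BddBelow (Set.range fun w : C => ‖x - (w : X)‖) :=
    ⟨0, Set.forall_mem_range.2 fun _ => norm_nonneg _⟩
  refine le_antisymm (le_ciInf fun w => ?_) (ciInf_le hbdd ⟨p, hp.1⟩)
  simpa [dist_eq_norm] using hp.2 w w.2

lemma aw_infDist_to {Cn : ℕ → Set X} {C : Set X} (hAW : AWTendsto Cn C)
    (hCn_ne : ∀ n, (Cn n).Nonempty) {y : X} (hy : y ∈ C) :
    Tendsto (fun n => infDist y (Cn n)) atTop (nhds 0) := by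
  obtain ⟨N, hN⟩ := exists_nat_ge ‖y‖
  have h := hAW N
  refine tendsto_of_tendsto_of_tendsto_of_le_of_le tendsto_const_nhds h
    (fun n => infDist_nonneg) (fun n => ?_)
  have hyb : y ∈ C ∩ closedBall (0 : X) N :=
    ⟨hy, by simpa [mem_closedBall, dist_eq_norm] using hN⟩
  refine le_trans ?_ (le_max_right _ _)
  obtain ⟨t, ht⟩ := hCn_ne n
  have hbdd : BddAbove (Set.range fun s : ↥(C ∩ closedBall (0 : X) N) =>
      infDist (s : X) (Cn n)) := by
    refine ⟨N + ‖t‖, Set.forall_mem_range.2 fun s => ?_⟩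
    have hsN : ‖(s : X)‖ ≤ N := by
      have := s.2.2
      simpa [mem_closedBall, dist_eq_norm] using this
    calc infDist (s : X) (Cn n) ≤ dist (s : X) t := infDist_le_dist_of_mem ht
      _ ≤ ‖(s : X)‖ + ‖t‖ := by rw [dist_eq_norm]; exact norm_sub_le _ _
      _ ≤ N + ‖t‖ := by linarith
  exact le_ciSup hbdd (⟨y, hyb⟩ : ↥(C ∩ closedBall (0 : X) N))

lemma aw_infDist_from {Cn : ℕ → Set X} {C : Set X} (hAW : AWTendsto Cn C)
    (hC_ne : C.Nonempty) {p : ℕ → X} (hp : ∀ n, p n ∈ Cn n) {R : ℕ}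
    (hR : ∀ n, ‖p n‖ ≤ R) :
    Tendsto (fun n => infDist (p n) C) atTop (nhds 0) := by
  have h := hAW R
  refine tendsto_of_tendsto_of_tendsto_of_le_of_le tendsto_const_nhds h
    (fun n => infDist_nonneg) (fun n => ?_)
  have hpb : p n ∈ Cn n ∩ closedBall (0 : X) R :=
    ⟨hp n, by simpa [mem_closedBall, dist_eq_norm] using hR n⟩
  refine le_trans ?_ (le_max_left _ _)
  obtain ⟨c, hc⟩ := hC_ne
  have hbdd : BddAbove (Set.range fun s : ↥(Cn n ∩ closedBall (0 : X) R) =>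
      infDist (s : X) C) := by
    refine ⟨R + ‖c‖, Set.forall_mem_range.2 fun s => ?_⟩
    have hsN : ‖(s : X)‖ ≤ R := by
      have := s.2.2
      simpa [mem_closedBall, dist_eq_norm] using this
    calc infDist (s : X) C ≤ dist (s : X) c := infDist_le_dist_of_mem hc
      _ ≤ ‖(s : X)‖ + ‖c‖ := by rw [dist_eq_norm]; exact norm_sub_le _ _
      _ ≤ R + ‖c‖ := by linarith
  exact le_ciSup hbdd (⟨p n, hpb⟩ : ↥(Cn n ∩ closedBall (0 : X) R))

lemma proj_tendsto [CompleteSpace X] {Cn : ℕ → Set X} {C : Set X}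
    (hCne : C.Nonempty) (hCconv : Convex ℝ C)
    (hCn : ∀ n, (Cn n).Nonempty)
    (hAW : AWTendsto Cn C) {x : ℕ → X} {x₀ : X}
    (hx : Tendsto x atTop (nhds x₀)) {p : ℕ → X}
    (hp : ∀ n, IsProjPt (Cn n) (x n) (p n)) {p₀ : X}
    (hp₀ : IsProjPt C x₀ p₀) :
    Tendsto p atTop (nhds p₀) := by
  obtain ⟨c, hc⟩ := hCne
  have hcd : Tendsto (fun n => infDist c (Cn n)) atTop (nhds 0) := aw_infDist_to hAW hCn hc
  obtain ⟨K, hK⟩ := (hx.norm).bddAbove_range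
  obtain ⟨M, hM⟩ := hcd.bddAbove_range
  have hKn : ∀ n, ‖x n‖ ≤ K := fun n => hK (Set.mem_range_self n)
  have hMn : ∀ n, infDist c (Cn n) ≤ M := fun n => hM (Set.mem_range_self n)
  have hdle : ∀ n, dist (x n) (p n) ≤ infDist (x n) (Cn n) := fun n =>
    le_infDist' (hCn n) (hp n).2
  have hdistb : ∀ n, dist (x n) (p n) ≤ M + (K + ‖c‖) := by
    intro n
    calc dist (x n) (p n) ≤ infDist (x n) (Cn n) := hdle n
      _ ≤ infDist c (Cn n) + dist (x n) c := infDist_le_infDist_add_dist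
      _ ≤ M + (K + ‖c‖) := by
          have : dist (x n) c ≤ ‖x n‖ + ‖c‖ := by
            rw [dist_eq_norm]; exact norm_sub_le _ _
          have := hKn n; have := hMn n; linarith [hKn n, hMn n,
            (by rw [dist_eq_norm]; exact norm_sub_le (x n) c : dist (x n) c ≤ ‖x n‖ + ‖c‖)]
  have hpb : ∀ n, ‖p n‖ ≤ K + (M + (K + ‖c‖)) := by
    intro n
    have hns : ‖p n‖ - ‖x n‖ ≤ ‖p n - x n‖ := norm_sub_norm_le _ _
    have hds : ‖p n - x n‖ = dist (x n) (p n) := by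
      rw [dist_eq_norm, norm_sub_rev]
    linarith [hKn n, hdistb n]
  obtain ⟨R, hRn⟩ := exists_nat_ge (K + (M + (K + ‖c‖)))
  have hpC : Tendsto (fun n => infDist (p n) C) atTop (nhds 0) :=
    aw_infDist_from hAW ⟨c, hc⟩ (fun n => (hp n).1) (fun n => (hpb n).trans hRn)
  have hq : ∀ n : ℕ, ∃ q ∈ C, dist (p n) q < infDist (p n) C + 1 / (n + 1) := by
    intro n
    refine (infDist_lt_iff ⟨c, hc⟩).mp ?_
    have : (0:ℝ) < 1 / (n + 1) := by positivity
    linarith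
  choose q hqC hqd using hq
  have hone : Tendsto (fun n : ℕ => (1 : ℝ) / (n + 1)) atTop (nhds 0) :=
    tendsto_one_div_add_atTop_nhds_zero_nat
  have hqd0 : Tendsto (fun n => dist (p n) (q n)) atTop (nhds 0) := by
    have hlim : Tendsto (fun n => infDist (p n) C + 1 / (n + 1 : ℝ)) atTop (nhds (0 + 0)) :=
      hpC.add hone
    rw [add_zero] at hlim
    exact tendsto_of_tendsto_of_tendsto_of_le_of_le tendsto_const_nhds hlim
      (fun n => dist_nonneg) (fun n => (hqd n).le)
  have hp₀d : Tendsto (fun n => infDist p₀ (Cn n)) atTop (nhds 0) :=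
    aw_infDist_to hAW hCn hp₀.1
  have hxd : Tendsto (fun n => dist x₀ (x n)) atTop (nhds 0) := by
    have := (tendsto_const_nhds (x := x₀) (f := atTop)).dist hx
    simpa using this
  have hxp₀ : Tendsto (fun n => dist (x n) p₀) atTop (nhds (dist x₀ p₀)) :=
    hx.dist tendsto_const_nhds
  set U : ℕ → ℝ := fun n =>
    dist x₀ (x n) + (infDist p₀ (Cn n) + dist (x n) p₀) + dist (p n) (q n) with hU_def
  have hU : Tendsto U atTop (nhds (dist x₀ p₀)) := by
    have := (hxd.add (hp₀d.add hxp₀)).add hqd0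
    simpa using this
  have hle1 : ∀ n, dist x₀ (q n) ≤ U n := by
    intro n
    have t1 : dist x₀ (q n) ≤ dist x₀ (x n) + dist (x n) (p n) + dist (p n) (q n) :=
      dist_triangle4 _ _ _ _
    have t2 : dist (x n) (p n) ≤ infDist p₀ (Cn n) + dist (x n) p₀ :=
      (hdle n).trans infDist_le_infDist_add_dist
    simp only [hU_def]
    linarith
  have hge1 : ∀ n, dist x₀ p₀ ≤ dist x₀ (q n) := fun n => hp₀.2 _ (hqC n)
  have hs : Tendsto (fun n => dist x₀ (q n)) atTop (nhds (dist x₀ p₀)) :=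
    tendsto_of_tendsto_of_tendsto_of_le_of_le tendsto_const_nhds hU hge1 hle1
  have hqp : ∀ n, ‖q n - p₀‖ ^ 2 ≤ 2 * dist x₀ (q n) ^ 2 - 2 * dist x₀ p₀ ^ 2 :=
    fun n => projpt_sq hCconv hp₀ (hqC n)
  have h2 : Tendsto (fun n => 2 * dist x₀ (q n) ^ 2 - 2 * dist x₀ p₀ ^ 2) atTop (nhds 0) := by
    have := ((hs.pow 2).const_mul 2).sub
      (tendsto_const_nhds (x := 2 * dist x₀ p₀ ^ 2) (f := atTop))
    simpa using this
  have hq2 : Tendsto (fun n => ‖q n - p₀‖ ^ 2) atTop (nhds 0) :=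
    tendsto_of_tendsto_of_tendsto_of_le_of_le tendsto_const_nhds h2
      (fun n => sq_nonneg _) hqp
  have hq0 : Tendsto (fun n => ‖q n - p₀‖) atTop (nhds 0) := by
    have hsqrt := hq2.sqrt
    rw [Real.sqrt_zero] at hsqrt
    refine hsqrt.congr fun n => ?_
    exact Real.sqrt_sq (norm_nonneg _)
  have hfin : Tendsto (fun n => dist (p n) p₀) atTop (nhds 0) := by
    have hlim : Tendsto (fun n => dist (p n) (q n) + ‖q n - p₀‖) atTop (nhds (0 + 0)) :=
      hqd0.add hq0
    rw [add_zero] at hlim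
    refine tendsto_of_tendsto_of_tendsto_of_le_of_le tendsto_const_nhds hlim
      (fun n => dist_nonneg) (fun n => ?_)
    calc dist (p n) p₀ ≤ dist (p n) (q n) + dist (q n) p₀ := dist_triangle _ _ _
      _ = dist (p n) (q n) + ‖q n - p₀‖ := by rw [dist_eq_norm (q n) p₀]
  exact tendsto_iff_dist_tendsto_zero.mpr hfin

end Helpers

set_option maxHeartbeats 1000000 in
theorem stmt16 {X : Type*} [NormedAddCommGroup X] [InnerProductSpace ℝ X] [CompleteSpace X]
    (A B : Set X) (hAne : A.Nonempty) (hBne : B.Nonempty)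
    (hAc : IsClosed A) (hBc : IsClosed B) (hAconv : Convex ℝ A) (hBconv : Convex ℝ B)
    (v : X) (hv : IsProjPt (closure (B - A)) 0 v)
    (E F : Set X)
    (hE : E = {a ∈ A | Metric.infDist a B = ⨅ a' : A, Metric.infDist (a' : X) B})
    (hF : F = {b ∈ B | Metric.infDist b A = ⨅ a' : A, Metric.infDist (a' : X) B})
    (hEne : E.Nonempty) (hFne : F.Nonempty)
    (An Bn : ℕ → Set X)
    (hAn : ∀ n, (An n).Nonempty ∧ IsClosed (An n) ∧ Convex ℝ (An n))
    (hBn : ∀ n, (Bn n).Nonempty ∧ IsClosed (Bn n) ∧ Convex ℝ (Bn n))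
    (hAnAW : AWTendsto An A) (hBnAW : AWTendsto Bn B)
    (a b : ℕ → X)
    (hb : ∀ n : ℕ, IsProjPt (Bn (n + 1)) (a n) (b (n + 1)))
    (ha : ∀ n : ℕ, IsProjPt (An (n + 1)) (b (n + 1)) (a (n + 1)))
    (e : X) (hconv : Filter.Tendsto a Filter.atTop (nhds e)) :
    e ∈ E ∧ Filter.Tendsto b Filter.atTop (nhds (e + v)) := by
  classical
  open Metric Filter in
  -- Step 1 : limits of the perturbed projections
  obtain ⟨f, hf⟩ := exists_isProjPt hBne hBc hBconv e
  have hAWB : AWTendsto (fun n => Bn (n + 1)) B := fun N =>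
    (hBnAW N).comp (tendsto_add_atTop_nat 1)
  have hbf : Filter.Tendsto (fun n => b (n + 1)) Filter.atTop (nhds f) :=
    proj_tendsto hBne hBconv (fun n => (hBn (n + 1)).1) hAWB hconv hb hf
  obtain ⟨g, hg⟩ := exists_isProjPt hAne hAc hAconv f
  have hAWA : AWTendsto (fun n => An (n + 1)) A := fun N =>
    (hAnAW N).comp (tendsto_add_atTop_nat 1)
  have hag : Filter.Tendsto (fun n => a (n + 1)) Filter.atTop (nhds g) :=
    proj_tendsto hAne hAconv (fun n => (hAn (n + 1)).1) hAWA hbf ha hg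
  have hge : g = e :=
    tendsto_nhds_unique hag ((Filter.tendsto_add_atTop_iff_nat 1).mpr hconv)
  rw [hge] at hg
  -- now `hg : IsProjPt A f e`, `hf : IsProjPt B e f`
  have heA : e ∈ A := hg.1
  have hfB : f ∈ B := hf.1
  have : Nonempty ↥A := hAne.to_subtype
  set δ : ℝ := ⨅ a' : A, Metric.infDist (a' : X) B with hδ_def
  have hbddA : BddBelow (Set.range fun a' : A => Metric.infDist (a' : X) B) :=
    ⟨0, Set.forall_mem_range.2 fun _ => Metric.infDist_nonneg⟩
  have hδ_le : ∀ a' ∈ A, δ ≤ Metric.infDist a' B := fun a' h => ciInf_le hbddA ⟨a', h⟩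
  -- inner product characterizations
  have hiA : ∀ w ∈ A, (inner ℝ (f - e) (w - e) : ℝ) ≤ 0 := isProjPt_inner hAconv hg
  have hiB : ∀ w ∈ B, (inner ℝ (e - f) (w - f) : ℝ) ≤ 0 := isProjPt_inner hBconv hf
  -- key inequality : ‖f - e‖ ≤ ‖b' - a'‖ for all a' ∈ A, b' ∈ B
  have hkey : ∀ a' ∈ A, ∀ b' ∈ B, ‖f - e‖ ≤ ‖b' - a'‖ := by
    intro a' ha' b' hb'
    have e1 := hiB b' hb'
    have e2 := hiA a' ha'
    have hsplit : (b' : X) - a' = (b' - f) + (f - e) + (e - a') := by abel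
    have hexp : (inner ℝ (f - e) (b' - a') : ℝ) =
        inner ℝ (f - e) (b' - f) + ‖f - e‖ ^ 2 + inner ℝ (f - e) (e - a') := by
      rw [hsplit, inner_add_right, inner_add_right, real_inner_self_eq_norm_sq]
    have hterm1 : (0:ℝ) ≤ inner ℝ (f - e) (b' - f) := by
      have : (inner ℝ (e - f) (b' - f) : ℝ) = - inner ℝ (f - e) (b' - f) := by
        rw [show e - f = -(f - e) by abel, inner_neg_left]
      linarith [e1, this ▸ e1]
    have hterm2 : (0:ℝ) ≤ inner ℝ (f - e) (e - a') := by
      have h' : (inner ℝ (f - e) (e - a') : ℝ) = - inner ℝ (f - e) (a' - e) := by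
        rw [show e - a' = -(a' - e) by abel, inner_neg_right]
      rw [h']; linarith
    have hlow : ‖f - e‖ ^ 2 ≤ (inner ℝ (f - e) (b' - a') : ℝ) := by
      rw [hexp]; linarith
    have hcs : (inner ℝ (f - e) (b' - a') : ℝ) ≤ ‖f - e‖ * ‖b' - a'‖ :=
      real_inner_le_norm _ _
    rcases eq_or_lt_of_le (norm_nonneg (f - e)) with h0 | h0
    · rw [← h0]; exact norm_nonneg _
    · nlinarith
  have hdist_key : ∀ a' ∈ A, ∀ b' ∈ B, ‖f - e‖ ≤ dist a' b' := by
    intro a' ha' b' hb'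
    rw [dist_eq_norm, norm_sub_rev a' b']
    exact hkey a' ha' b' hb'
  -- ‖f - e‖ = δ and infDist e B = δ
  have h1 : ‖f - e‖ ≤ δ := by
    rw [hδ_def]
    exact le_ciInf fun a' => le_infDist' hBne fun b' hb' => hdist_key a' a'.2 b' hb'
  have h2 : Metric.infDist e B ≤ ‖f - e‖ := by
    have := Metric.infDist_le_dist_of_mem (x := e) hfB
    rwa [dist_eq_norm, norm_sub_rev] at this
  have h3 : δ ≤ Metric.infDist e B := hδ_le e heA
  have hfeδ : ‖f - e‖ = δ := le_antisymm h1 (h3.trans h2)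
  have hinfδ : Metric.infDist e B = δ := le_antisymm (h2.trans h1) h3
  -- f - e is the projection of 0 onto closure (B - A)
  have hvproj : IsProjPt (closure (B - A)) 0 (f - e) := by
    constructor
    · exact subset_closure (Set.sub_mem_sub hfB heA)
    · intro y hy
      have hclosed : IsClosed {y : X | dist (0 : X) (f - e) ≤ dist (0 : X) y} :=
        isClosed_le continuous_const (continuous_const.dist continuous_id)
      have hsub : B - A ⊆ {y : X | dist (0 : X) (f - e) ≤ dist (0 : X) y} := by
        rintro z hz
        rw [Set.mem_sub] at hz
        obtain ⟨b', hb', a', ha', rfl⟩ := hz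
        simp only [Set.mem_setOf_eq, dist_zero_left]
        exact hkey a' ha' b' hb'
      exact (hclosed.closure_subset_iff.mpr hsub) hy
  have hfev : f - e = v := isProjPt_unique (hBconv.sub hAconv).closure hvproj hv
  have hfv : e + v = f := by rw [← hfev]; abel
  constructor
  · rw [hE]
    exact ⟨heA, by rw [hinfδ]⟩
  · rw [hfv]
    exact (Filter.tendsto_add_atTop_iff_nat 1).mp hbf
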